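/- No nonempty product of nonempty prefixes of a reduced word over a free group's generating alphabet equals the identity: if w is a reduced word over A ∪ A⁻¹ and p₁, …, pₙ (n ≥ 1) are nonempty prefixes of w, then the product p₁p₂⋯pₙ is not equal to 1 in the free group on A. -/

import Mathlib

open Order

/-- Any finite partial order isomorphism of `ℚ` extends to an order isomorphism. -/
theorem exists_orderIso_extend (f₀ : Order.PartialIso ℚ ℚ) :
    ∃ F : ℚ ≃o ℚ, ∀ p ∈ f₀.val, F p.1 = p.2 := by
  cases nonempty_encodable ℚ
  let to_cofinal : ℚ ⊕ ℚ → Cofinal (PartialIso ℚ ℚ) := fun p ↦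
    Sum.recOn p (PartialIso.definedAtLeft ℚ) (PartialIso.definedAtRight ℚ)
  let our_ideal : Ideal (PartialIso ℚ ℚ) := idealOfCofinals f₀ to_cofinal
  let F := fun a => PartialIso.funOfIdeal a our_ideal
    (cofinal_meets_idealOfCofinals _ to_cofinal (Sum.inl a))
  let G := fun b => PartialIso.invOfIdeal b our_ideal
    (cofinal_meets_idealOfCofinals _ to_cofinal (Sum.inr b))
  refine ⟨OrderIso.ofCmpEqCmp (fun a ↦ (F a).val) (fun b ↦ (G b).val) fun a b => ?_, ?_⟩
  · rcases (F a).prop with ⟨f, hf, ha⟩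
    rcases (G b).prop with ⟨g, hg, hb⟩
    rcases our_ideal.directed _ hf _ hg with ⟨m, _, fm, gm⟩
    exact m.prop (a, _) (fm ha) (_, b) (gm hb)
  · intro p hp
    rcases (F p.1).prop with ⟨f, hf, ha⟩
    rcases our_ideal.directed _ hf _ (mem_idealOfCofinals f₀ to_cofinal) with ⟨m, _, fm, gm⟩
    have := m.prop (p.1, (F p.1).val) (fm ha) (p.1, p.2) (gm hp)
    rw [cmp_self_eq_eq] at this
    exact cmp_eq_eq_iff _ _ |>.mp this.symm

namespace Stmt5Aux

variable {A : Type*} [DecidableEq A]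

/-- A reduced word has no adjacent inverse pair. -/
theorem no_adj (w : List (A × Bool)) (hred : FreeGroup.reduce w = w)
    (k : ℕ) (h1 : k + 1 < w.length) (x : A) (b : Bool)
    (hk : w[k] = (x, b)) (hk1 : w[k + 1] = (x, !b)) : False := by
  have e1 : w = w.take k ++ (x, b) :: (x, !b) :: w.drop (k + 2) := by
    conv_lhs => rw [← List.take_append_drop k w]
    congr 1
    rw [List.drop_eq_getElem_cons (by omega : k < w.length), hk]
    congr 1
    rw [List.drop_eq_getElem_cons h1, hk1]
  exact FreeGroup.reduce.not (hred.trans e1)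

/-- the pair of rationals constraining the letter at position `k`. -/
def pairAt (w : List (A × Bool)) (k : Fin w.length) : ℚ × ℚ :=
  cond (w.get k).2 ((k : ℚ) + 1, (k : ℚ)) ((k : ℚ), (k : ℚ) + 1)

theorem no_adj' (w : List (A × Bool)) (hred : FreeGroup.reduce w = w)
    (i j : ℕ) (hij : j = i + 1) (hj : j < w.length) (x : A) (b : Bool)
    (hk : w[i] = (x, b)) (hk1 : w[j] = (x, !b)) : False := by
  subst hij
  exact no_adj w hred i hj x b hk hk1

theorem pair_lt (w : List (A × Bool)) (hred : FreeGroup.reduce w = w)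
    (k k' : Fin w.length) (ha : (w.get k).1 = (w.get k').1) (hkk : (k : ℕ) < (k' : ℕ)) :
    (pairAt w k).1 < (pairAt w k').1 ∧ (pairAt w k).2 < (pairAt w k').2 := by
  have hq : ((k : ℕ) : ℚ) < ((k' : ℕ) : ℚ) := by exact_mod_cast hkk
  have hadj : ∀ b : Bool, (w.get k).2 = b → (w.get k').2 = !b → (k : ℕ) + 1 ≠ (k' : ℕ) := by
    intro b hb hb' he
    apply no_adj' w hred (k : ℕ) (k' : ℕ) he.symm k'.isLt (w.get k).1 b
    · exact Prod.ext rfl hb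
    · exact Prod.ext ha.symm hb'
  cases hb : (w.get k).2 <;> cases hb' : (w.get k').2 <;>
    simp only [pairAt, hb, hb', cond_true, cond_false]
  · exact ⟨hq, by linarith⟩
  · have h2 : (k : ℕ) + 1 < (k' : ℕ) :=
      lt_of_le_of_ne hkk (hadj false hb hb')
    have h2q : ((k : ℕ) : ℚ) + 1 < ((k' : ℕ) : ℚ) := by exact_mod_cast h2
    exact ⟨by linarith, h2q⟩
  · have h2 : (k : ℕ) + 1 < (k' : ℕ) :=
      lt_of_le_of_ne hkk (hadj true hb hb')
    have h2q : ((k : ℕ) : ℚ) + 1 < ((k' : ℕ) : ℚ) := by exact_mod_cast h2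
    exact ⟨h2q, by linarith⟩
  · exact ⟨by linarith, hq⟩

/-- The constraints for the letter `a` form a partial order isomorphism of `ℚ`. -/
def constr (w : List (A × Bool)) (hred : FreeGroup.reduce w = w) (a : A) :
    Order.PartialIso ℚ ℚ := by
  refine ⟨Finset.image (fun k => pairAt w k)
    (Finset.filter (fun k : Fin w.length => (w.get k).1 = a) Finset.univ), ?_⟩
  intro p hp q hq
  simp only [Finset.mem_image, Finset.mem_filter, Finset.mem_univ, true_and] at hp hq
  obtain ⟨k, hk, rfl⟩ := hp
  obtain ⟨k', hk', rfl⟩ := hq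
  have ha : (w.get k).1 = (w.get k').1 := hk.trans hk'.symm
  rcases lt_trichotomy (k : ℕ) (k' : ℕ) with h | h | h
  · obtain ⟨h1, h2⟩ := pair_lt w hred k k' ha h
    rw [(cmp_eq_lt_iff _ _).2 h1, (cmp_eq_lt_iff _ _).2 h2]
  · have : k = k' := Fin.ext h
    subst this
    simp [cmp_self_eq_eq]
  · obtain ⟨h1, h2⟩ := pair_lt w hred k' k ha.symm h
    rw [(cmp_eq_gt_iff _ _).2 h1, (cmp_eq_gt_iff _ _).2 h2]

/-- Choice of an order isomorphism of `ℚ` realizing the constraints of letter `a`. -/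
noncomputable def fa (w : List (A × Bool)) (hred : FreeGroup.reduce w = w) (a : A) : ℚ ≃o ℚ :=
  (exists_orderIso_extend (constr w hred a)).choose

theorem fa_spec (w : List (A × Bool)) (hred : FreeGroup.reduce w = w) (a : A)
    {p : ℚ × ℚ} (hp : p ∈ (constr w hred a).val) : fa w hred a p.1 = p.2 :=
  (exists_orderIso_extend (constr w hred a)).choose_spec p hp

theorem fa_apply_true (w : List (A × Bool)) (hred : FreeGroup.reduce w = w)
    (k : ℕ) (hk : k < w.length) (hb : w[k].2 = true) :
    fa w hred w[k].1 ((k : ℚ) + 1) = (k : ℚ) := by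
  have hmem : pairAt w ⟨k, hk⟩ ∈ (constr w hred w[k].1).val := by
    simp only [constr, Finset.mem_image, Finset.mem_filter, Finset.mem_univ, true_and]
    exact ⟨⟨k, hk⟩, rfl, rfl⟩
  have h := fa_spec w hred w[k].1 hmem
  simp only [pairAt, List.get_eq_getElem, hb, cond_true] at h
  exact h

theorem fa_apply_false (w : List (A × Bool)) (hred : FreeGroup.reduce w = w)
    (k : ℕ) (hk : k < w.length) (hb : w[k].2 = false) :
    fa w hred w[k].1 (k : ℚ) = (k : ℚ) + 1 := by
  have hmem : pairAt w ⟨k, hk⟩ ∈ (constr w hred w[k].1).val := by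
    simp only [constr, Finset.mem_image, Finset.mem_filter, Finset.mem_univ, true_and]
    exact ⟨⟨k, hk⟩, rfl, rfl⟩
  have h := fa_spec w hred w[k].1 hmem
  simp only [pairAt, List.get_eq_getElem, hb, cond_false] at h
  exact h

/-- The homomorphism from the free group into the order isomorphisms of `ℚ`. -/
noncomputable def phi (w : List (A × Bool)) (hred : FreeGroup.reduce w = w) :
    FreeGroup A →* (ℚ ≃o ℚ) :=
  FreeGroup.lift (fa w hred)

theorem phi_take (w : List (A × Bool)) (hred : FreeGroup.reduce w = w) :
    ∀ j ≤ w.length, phi w hred (FreeGroup.mk (w.take j)) (j : ℚ) = 0 := by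
  intro j
  induction j with
  | zero => intro _; simp [phi]
  | succ j ih =>
    intro hj
    have hjlt : j < w.length := by omega
    have hw : w.take (j + 1) = w.take j ++ [w[j]] := by
      rw [List.take_succ]
      simp [List.getElem?_eq_getElem hjlt]
    rw [hw, ← FreeGroup.mul_mk, map_mul]
    have hsingle : phi w hred (FreeGroup.mk [w[j]]) ((j : ℚ) + 1) = (j : ℚ) := by
      rcases hb : w[j].2 with _ | _
      · -- negative letter: (fa)⁻¹
        have h2 := fa_apply_false w hred j hjlt hb
        have h1 : phi w hred (FreeGroup.mk [w[j]]) = (fa w hred w[j].1)⁻¹ := by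
          simp [phi, FreeGroup.lift_mk, hb]
        rw [h1, ← h2]
        exact (fa w hred w[j].1).symm_apply_apply _
      · have h2 := fa_apply_true w hred j hjlt hb
        have h1 : phi w hred (FreeGroup.mk [w[j]]) = fa w hred w[j].1 := by
          simp [phi, FreeGroup.lift_mk, hb]
        rw [h1, h2]
    have happ : (phi w hred (FreeGroup.mk (w.take j)) * phi w hred (FreeGroup.mk [w[j]]))
        ((j : ℚ) + 1) = phi w hred (FreeGroup.mk (w.take j))
          (phi w hred (FreeGroup.mk [w[j]]) ((j : ℚ) + 1)) := rfl
    have hcast : ((j + 1 : ℕ) : ℚ) = (j : ℚ) + 1 := by push_cast; ring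
    rw [hcast, happ, hsingle, ih (by omega)]

end Stmt5Aux

theorem stmt_5 {A : Type*} [DecidableEq A] (w : List (A × Bool))
    (hred : FreeGroup.reduce w = w) (hw : w ≠ [])
    (l : List (List (A × Bool))) (hl : l ≠ [])
    (hpre : ∀ p ∈ l, p ≠ [] ∧ ∃ j : ℕ, p = w.take j) :
    (l.map FreeGroup.mk).prod ≠ 1 := by
  classical
  intro hcontra
  set φ := Stmt5Aux.phi w hred with hφ
  -- each prefix acts sending `1` below `0`
  have hgood : ∀ p ∈ l, ∀ x : ℚ, x ≤ 1 → φ (FreeGroup.mk p) x ≤ 0 := by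
    intro p hp x hx
    obtain ⟨hpne, j, hpj⟩ := hpre p hp
    have hlen : p.length ≤ w.length := by
      rw [hpj, List.length_take]; omega
    have hptake : w.take p.length = p := by
      have h1 : p.length = min j w.length := by rw [hpj, List.length_take]
      rw [h1, ← List.take_take, List.take_length]
      exact hpj.symm
    have h0 : φ (FreeGroup.mk p) ((p.length : ℕ) : ℚ) = 0 := by
      have h2 := Stmt5Aux.phi_take w hred p.length hlen
      rw [hptake] at h2
      exact h2
    have h1le : (1 : ℚ) ≤ (p.length : ℚ) := by
      have : 1 ≤ p.length := List.length_pos_iff.2 hpne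
      exact_mod_cast this
    calc φ (FreeGroup.mk p) x ≤ φ (FreeGroup.mk p) ((p.length : ℕ) : ℚ) :=
          (φ (FreeGroup.mk p)).le_iff_le.2 (le_trans hx h1le)
      _ = 0 := h0
  -- product of such maps sends 1 to ≤ 0
  have hprod : ∀ (L : List (List (A × Bool))), L ≠ [] →
      (∀ p ∈ L, ∀ x : ℚ, x ≤ 1 → φ (FreeGroup.mk p) x ≤ 0) →
      ((L.map (fun p => φ (FreeGroup.mk p))).prod) (1 : ℚ) ≤ 0 := by
    intro L
    induction L with
    | nil => intro h; exact absurd rfl h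
    | cons p t iht =>
      intro _ hall
      rcases eq_or_ne t [] with rfl | htne
      · simpa using hall p (by simp) 1 le_rfl
      · have ht0 := iht htne (fun q hq => hall q (List.mem_cons_of_mem _ hq))
        have : ((List.map (fun p => φ (FreeGroup.mk p)) (p :: t)).prod) (1 : ℚ)
            = φ (FreeGroup.mk p) (((t.map (fun p => φ (FreeGroup.mk p))).prod) 1) := rfl
        rw [this]
        exact hall p List.mem_cons_self _ (le_trans ht0 (by norm_num))
  have hφprod : ((l.map (fun p => φ (FreeGroup.mk p))).prod) (1 : ℚ) ≤ 0 := hprod l hl hgood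
  have : (l.map (fun p => φ (FreeGroup.mk p))).prod = 1 := by
    have := congrArg φ hcontra
    rwa [map_list_prod, List.map_map, map_one] at this
  rw [this] at hφprod
  norm_num at hφprod
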